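/- Uniqueness in subjective state-dependent expected utility: Let Ω be a finite state space, M a finite outcome set, L = Δ(M). Suppose (P₁,u₁) and (P₂,u₂) both represent the same family of conditional preferences {⪰_A : ∅ ≠ A ⊆ Ω} via x ⪰_A y ⟺ ∑_{ω∈A} P_i(ω|A) E^x[u_i(ω,·)] ≥ ∑_{ω∈A} P_i(ω|A) E^y[u_i(ω,·)], where P₁, P₂ are strictly positive probability measures on Ω. Assume the family satisfies the richness axiom and strong minimal agreement (there exist lotteries x̄, x̲ with x̄ ≻_ω x̲ for all ω, and u_i(ω, x̄) and u_i(ω, x̲) each independent of ω for i = 1,2). Then P₁ = P₂ and there exist α > 0, β ∈ ℝ with u₂(ω, m) = α u₁(ω, m) + β for all ω ∈ Ω, m ∈ M. -/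

import Mathlib

open Finset

/-- Expected utility of a lottery `x` in state `ω` for state-dependent utility `u`. -/
def EU {Ω M : Type*} [Fintype M] (u : Ω → M → ℝ) (ω : Ω) (x : M → ℝ) : ℝ :=
  ∑ m, x m * u ω m

/-- Conditional expected value of lottery `x` given event `A`, with prior `P` and
state-dependent utility `u`. -/
noncomputable def CondVal {Ω M : Type*} [Fintype M] (P : Ω → ℝ) (u : Ω → M → ℝ)
    (A : Finset Ω) (x : M → ℝ) : ℝ :=
  ∑ ω ∈ A, (P ω / ∑ ω' ∈ A, P ω') * EU u ω x

/-- A lottery over outcomes. -/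
def IsLottery {M : Type*} [Fintype M] (x : M → ℝ) : Prop :=
  (∀ m, 0 ≤ x m) ∧ ∑ m, x m = 1

def mix18 {M : Type*} (μ : ℝ) (x y : M → ℝ) : M → ℝ := fun m => μ * x m + (1 - μ) * y m

lemma isLottery_mix18 {M : Type*} [Fintype M] {x y : M → ℝ} (hx : IsLottery x)
    (hy : IsLottery y) {μ : ℝ} (h0 : 0 ≤ μ) (h1 : μ ≤ 1) : IsLottery (mix18 μ x y) := by
  constructor
  · intro m
    exact add_nonneg (mul_nonneg h0 (hx.1 m)) (mul_nonneg (by linarith) (hy.1 m))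
  · simp [mix18, Finset.sum_add_distrib, ← Finset.mul_sum, hx.2, hy.2]

lemma EU_mix18 {Ω M : Type*} [Fintype M] (u : Ω → M → ℝ) (ω : Ω) (μ : ℝ) (x y : M → ℝ) :
    EU u ω (mix18 μ x y) = μ * EU u ω x + (1 - μ) * EU u ω y := by
  simp [EU, mix18, add_mul, Finset.sum_add_distrib, Finset.mul_sum, mul_assoc]

lemma isLottery_delta {M : Type*} [Fintype M] [DecidableEq M] (m : M) :
    IsLottery (fun m' => if m' = m then (1:ℝ) else 0) := by
  constructor
  · intro m'; dsimp only; split <;> norm_num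
  · simp

lemma EU_delta {Ω M : Type*} [Fintype M] [DecidableEq M] (u : Ω → M → ℝ) (ω : Ω) (m : M) :
    EU u ω (fun m' => if m' = m then (1:ℝ) else 0) = u ω m := by
  simp [EU, ite_mul]

lemma CondVal_singleton {Ω M : Type*} [Fintype M] (P : Ω → ℝ) (u : Ω → M → ℝ) (ω : Ω)
    (x : M → ℝ) (hP : P ω ≠ 0) : CondVal P u {ω} x = EU u ω x := by
  simp [CondVal, div_self hP]

lemma CondVal_pair {Ω M : Type*} [Fintype M] [DecidableEq Ω] (P : Ω → ℝ) (u : Ω → M → ℝ)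
    {ω ω' : Ω} (x : M → ℝ) (hne : ω ≠ ω') :
    CondVal P u {ω, ω'} x = (P ω / (P ω + P ω')) * EU u ω x
      + (P ω' / (P ω + P ω')) * EU u ω' x := by
  rw [CondVal, Finset.sum_pair hne, Finset.sum_pair hne]

lemma sep18 {Ω M : Type*} [Fintype M] (u : Ω → M → ℝ) (ω ω' : Ω)
    (xb xl x y : M → ℝ) (hxb : IsLottery xb) (hxl : IsLottery xl)
    (hx : IsLottery x) (hy : IsLottery y)
    (hEb : EU u ω xb = EU u ω' xb) (hEl : EU u ω xl = EU u ω' xl)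
    (hBlt : EU u ω' xl < EU u ω' xb)
    (h1 : EU u ω' y < EU u ω' x) (h2 : EU u ω x ≤ EU u ω y)
    {p q : ℝ} (hp0 : 0 ≤ p) (hq1 : q ≤ 1) (hpq : p < q) :
    ∃ x' y', IsLottery x' ∧ IsLottery y' ∧
      p * EU u ω y' + (1-p) * EU u ω' y' < p * EU u ω x' + (1-p) * EU u ω' x' ∧
      q * EU u ω x' + (1-q) * EU u ω' x' < q * EU u ω y' + (1-q) * EU u ω' y' := by
  set F := EU u ω x with hF
  set F' := EU u ω y with hF'
  set G := EU u ω' x with hG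
  set G' := EU u ω' y with hG'
  set a := EU u ω' xl with ha
  set b := EU u ω' xb with hb
  clear_value F F' G G' a b
  have hab : a < b := hBlt
  set tp := p * (F - F') + (1-p) * (G - G') with htp
  set tq := q * (F - F') + (1-q) * (G - G') with htq
  clear_value tp tq
  have htlt : tq < tp := by
    have h3 : tp - tq = (q - p) * ((G - G') - (F - F')) := by rw [htp, htq]; ring
    nlinarith [mul_pos (sub_pos.2 hpq) (show (0:ℝ) < (G - G') - (F - F') by linarith)]
  set B := b - a with hBdef
  clear_value B
  have hB : 0 < B := by rw [hBdef]; linarith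
  set S := |tp| + |tq| with hSdef
  clear_value S
  have hS : 0 < S := by
    rcases eq_or_ne tp 0 with h | h
    · have h2' : tq ≠ 0 := by rw [h] at htlt; exact ne_of_lt htlt
      rw [hSdef]; have := abs_pos.2 h2'; have := abs_nonneg tp; linarith
    · rw [hSdef]; have := abs_pos.2 h; have := abs_nonneg tq; linarith
  have hBS : 0 < B + S := by linarith
  set W := B * (tp + tq) / (2 * S) with hW
  clear_value W
  have hWabs : |W| ≤ B / 2 := by
    rw [hW, abs_div, abs_mul, abs_of_pos hB, abs_of_pos (by positivity : (0:ℝ) < 2 * S)]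
    rw [div_le_iff₀ (by positivity)]
    have h4 : |tp + tq| ≤ S := by rw [hSdef]; exact abs_add_le tp tq
    nlinarith [abs_nonneg (tp + tq)]
  have hWle := abs_le.1 hWabs
  set μ := B / (B + S) with hμ
  clear_value μ
  have hμ0 : 0 < μ := by rw [hμ]; exact div_pos hB hBS
  have hμ1 : μ < 1 := by rw [hμ, div_lt_one hBS]; linarith
  set v : ℝ := a + (B - W) / 2 with hv
  set v' : ℝ := a + (B + W) / 2 with hv'
  clear_value v v'
  have hva : a ≤ v ∧ v ≤ b := ⟨by rw [hv]; linarith, by rw [hv]; linarith [hBdef]⟩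
  have hva' : a ≤ v' ∧ v' ≤ b := ⟨by rw [hv']; linarith, by rw [hv']; linarith [hBdef]⟩
  set s : ℝ := (v - a) / B with hs
  set s' : ℝ := (v' - a) / B with hs'
  clear_value s s'
  have hs0 : 0 ≤ s := by rw [hs]; exact div_nonneg (by linarith [hva.1]) hB.le
  have hs1 : s ≤ 1 := by rw [hs, div_le_one hB]; linarith [hva.2]
  have hs0' : 0 ≤ s' := by rw [hs']; exact div_nonneg (by linarith [hva'.1]) hB.le
  have hs1' : s' ≤ 1 := by rw [hs', div_le_one hB]; linarith [hva'.2]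
  have hsB : s * B = v - a := by rw [hs]; exact div_mul_cancel₀ _ hB.ne'
  have hsB' : s' * B = v' - a := by rw [hs']; exact div_mul_cancel₀ _ hB.ne'
  set c := mix18 s xb xl with hc
  set c' := mix18 s' xb xl with hc'
  clear_value c c'
  have hcL : IsLottery c := hc ▸ isLottery_mix18 hxb hxl hs0 hs1
  have hcL' : IsLottery c' := hc' ▸ isLottery_mix18 hxb hxl hs0' hs1'
  have hEc1 : EU u ω c = v := by
    rw [hc, EU_mix18, hEb, hEl]; linear_combination hsB - s * hBdef
  have hEc2 : EU u ω' c = v := by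
    rw [hc, EU_mix18, ← hb, ← ha]; linear_combination hsB - s * hBdef
  have hEc1' : EU u ω c' = v' := by
    rw [hc', EU_mix18, hEb, hEl]; linear_combination hsB' - s' * hBdef
  have hEc2' : EU u ω' c' = v' := by
    rw [hc', EU_mix18, ← hb, ← ha]; linear_combination hsB' - s' * hBdef
  have hvv : v - v' = -W := by rw [hv, hv']; ring
  have hWμ : (1-μ) * W = μ * (tp + tq) / 2 := by
    rw [hμ, hW]; field_simp; ring
  refine ⟨mix18 μ x c, mix18 μ y c', isLottery_mix18 hx hcL hμ0.le hμ1.le,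
    isLottery_mix18 hy hcL' hμ0.le hμ1.le, ?_, ?_⟩
  · have key : (p * (μ * F + (1-μ) * v) + (1-p) * (μ * G + (1-μ) * v))
        - (p * (μ * F' + (1-μ) * v') + (1-p) * (μ * G' + (1-μ) * v'))
        = μ * (tp - tq) / 2 := by
      linear_combination (-μ) * htp + (1-μ) * hvv - hWμ
    have hpos : 0 < μ * (tp - tq) / 2 := div_pos (mul_pos hμ0 (sub_pos.2 htlt)) two_pos
    rw [EU_mix18, EU_mix18, EU_mix18, EU_mix18, hEc1, hEc2, hEc1', hEc2',
      ← hF, ← hF', ← hG, ← hG']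
    linarith [key, hpos]
  · have key : (q * (μ * F + (1-μ) * v) + (1-q) * (μ * G + (1-μ) * v))
        - (q * (μ * F' + (1-μ) * v') + (1-q) * (μ * G' + (1-μ) * v'))
        = μ * (tq - tp) / 2 := by
      linear_combination (-μ) * htq + (1-μ) * hvv - hWμ
    have hneg : μ * (tq - tp) / 2 < 0 :=
      div_neg_of_neg_of_pos (mul_neg_of_pos_of_neg hμ0 (sub_neg.2 htlt)) two_pos
    rw [EU_mix18, EU_mix18, EU_mix18, EU_mix18, hEc1, hEc2, hEc1', hEc2',
      ← hF, ← hF', ← hG, ← hG']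
    linarith [key, hneg]

set_option maxHeartbeats 1600000 in
theorem stmt18 {Ω M : Type*} [Fintype Ω] [Fintype M] [DecidableEq Ω]
    (P₁ P₂ : Ω → ℝ) (u₁ u₂ : Ω → M → ℝ)
    (hP₁pos : ∀ ω, 0 < P₁ ω) (hP₂pos : ∀ ω, 0 < P₂ ω)
    (hP₁sum : ∑ ω, P₁ ω = 1) (hP₂sum : ∑ ω, P₂ ω = 1)
    (hsame : ∀ A : Finset Ω, A.Nonempty → ∀ x y : M → ℝ, IsLottery x → IsLottery y →
      (CondVal P₁ u₁ A y ≤ CondVal P₁ u₁ A x ↔ CondVal P₂ u₂ A y ≤ CondVal P₂ u₂ A x))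
    (hrich : ∃ ω₁ ω₂ ω₃ : Ω, ω₁ ≠ ω₂ ∧ ω₁ ≠ ω₃ ∧ ω₂ ≠ ω₃ ∧
      ∀ ω ∈ ({ω₁, ω₂, ω₃} : Finset Ω), ∃ x y : M → ℝ, IsLottery x ∧ IsLottery y ∧
        EU u₁ ω y < EU u₁ ω x ∧
        ∀ ω' ∈ ({ω₁, ω₂, ω₃} : Finset Ω), ω' ≠ ω → EU u₁ ω' x ≤ EU u₁ ω' y)
    (hsma : ∃ xbar xlow : M → ℝ, IsLottery xbar ∧ IsLottery xlow ∧
      (∀ ω, EU u₁ ω xlow < EU u₁ ω xbar) ∧ (∀ ω, EU u₂ ω xlow < EU u₂ ω xbar) ∧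
      (∀ ω ω', EU u₁ ω xbar = EU u₁ ω' xbar) ∧ (∀ ω ω', EU u₁ ω xlow = EU u₁ ω' xlow) ∧
      (∀ ω ω', EU u₂ ω xbar = EU u₂ ω' xbar) ∧ (∀ ω ω', EU u₂ ω xlow = EU u₂ ω' xlow)) :
    P₁ = P₂ ∧ ∃ α β : ℝ, 0 < α ∧ ∀ ω m, u₂ ω m = α * u₁ ω m + β := by
  classical
  obtain ⟨xb, xl, hxb, hxl, hlt1, hlt2, hcb1, hcl1, hcb2, hcl2⟩ := hsma
  obtain ⟨ωa, ωb, ωc, hab, hac, hbc, hR⟩ := hrich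
  set b₁ := EU u₁ ωa xb with hb₁def
  set a₁ := EU u₁ ωa xl with ha₁def
  set b₂ := EU u₂ ωa xb with hb₂def
  set a₂ := EU u₂ ωa xl with ha₂def
  have hB : 0 < b₁ - a₁ := sub_pos.2 (hlt1 ωa)
  have hB2 : 0 < b₂ - a₂ := sub_pos.2 (hlt2 ωa)
  set α := (b₂ - a₂) / (b₁ - a₁) with hα_def
  have hα : 0 < α := div_pos hB2 hB
  set β := a₂ - α * a₁ with hβ_def
  have hαB : α * (b₁ - a₁) = b₂ - a₂ := by rw [hα_def]; exact div_mul_cancel₀ _ hB.ne'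
  clear_value b₁ a₁ b₂ a₂ α β
  have hEb1 : ∀ ω, EU u₁ ω xb = b₁ := fun ω => (hcb1 ω ωa).trans hb₁def.symm
  have hEl1 : ∀ ω, EU u₁ ω xl = a₁ := fun ω => (hcl1 ω ωa).trans ha₁def.symm
  have hEb2 : ∀ ω, EU u₂ ω xb = b₂ := fun ω => (hcb2 ω ωa).trans hb₂def.symm
  have hEl2 : ∀ ω, EU u₂ ω xl = a₂ := fun ω => (hcl2 ω ωa).trans ha₂def.symm
  have hmixE1 : ∀ (ω : Ω) (s : ℝ), EU u₁ ω (mix18 s xb xl) = s * b₁ + (1-s) * a₁ := by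
    intro ω s; rw [EU_mix18, hEb1, hEl1]
  have hmixE2 : ∀ (ω : Ω) (s : ℝ), EU u₂ ω (mix18 s xb xl) = s * b₂ + (1-s) * a₂ := by
    intro ω s; rw [EU_mix18, hEb2, hEl2]
  -- singleton events: state-by-state equivalence of preferences
  have hstar : ∀ (ω : Ω) (x y : M → ℝ), IsLottery x → IsLottery y →
      (EU u₁ ω y ≤ EU u₁ ω x ↔ EU u₂ ω y ≤ EU u₂ ω x) := by
    intro ω x y hx hy
    have h := hsame {ω} ⟨ω, mem_singleton_self ω⟩ x y hx hy
    rwa [CondVal_singleton _ _ _ _ (hP₁pos ω).ne', CondVal_singleton _ _ _ _ (hP₁pos ω).ne',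
      CondVal_singleton _ _ _ _ (hP₂pos ω).ne', CondVal_singleton _ _ _ _ (hP₂pos ω).ne'] at h
  -- calibration on [a₁, b₁]
  have hcal : ∀ (ω : Ω) (z : M → ℝ), IsLottery z → a₁ ≤ EU u₁ ω z → EU u₁ ω z ≤ b₁ →
      EU u₂ ω z = α * EU u₁ ω z + β := by
    intro ω z hz hza hzb
    set lam := (EU u₁ ω z - a₁) / (b₁ - a₁) with hlam
    clear_value lam
    have hl0 : 0 ≤ lam := by rw [hlam]; exact div_nonneg (by linarith) hB.le
    have hl1 : lam ≤ 1 := by rw [hlam, div_le_one hB]; linarith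
    have hlamB : lam * (b₁ - a₁) = EU u₁ ω z - a₁ := by
      rw [hlam]; exact div_mul_cancel₀ _ hB.ne'
    have hcmix : IsLottery (mix18 lam xb xl) := isLottery_mix18 hxb hxl hl0 hl1
    have hE1 : EU u₁ ω (mix18 lam xb xl) = EU u₁ ω z := by
      rw [hmixE1]; linear_combination hlamB
    have hle1 : EU u₂ ω z ≤ EU u₂ ω (mix18 lam xb xl) :=
      (hstar ω _ z hcmix hz).1 (le_of_eq hE1.symm)
    have hle2 : EU u₂ ω (mix18 lam xb xl) ≤ EU u₂ ω z :=
      (hstar ω z _ hz hcmix).1 (le_of_eq hE1)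
    have heq : EU u₂ ω z = lam * b₂ + (1-lam) * a₂ := by
      rw [← hmixE2 ω lam]; linarith
    rw [heq, hβ_def]
    linear_combination α * hlamB - lam * hαB
  -- affine relation on all lotteries
  have haff_lot : ∀ (ω : Ω) (x : M → ℝ), IsLottery x → EU u₂ ω x = α * EU u₁ ω x + β := by
    intro ω x hx
    set t := EU u₁ ω x with ht
    set d := |t - (a₁ + b₁)/2| with hd
    clear_value t d
    have hd0 : 0 ≤ d := by rw [hd]; exact abs_nonneg _
    set μ := ((b₁-a₁)/2) / (d + (b₁-a₁)/2) with hμdef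
    clear_value μ
    have hμ0 : 0 < μ := by rw [hμdef]; exact div_pos (by linarith) (by linarith)
    have hμ1 : μ ≤ 1 := by rw [hμdef, div_le_one (by linarith)]; linarith
    have hc : IsLottery (mix18 (1/2 : ℝ) xb xl) :=
      isLottery_mix18 hxb hxl (by norm_num) (by norm_num)
    have hz : IsLottery (mix18 μ x (mix18 (1/2 : ℝ) xb xl)) :=
      isLottery_mix18 hx hc hμ0.le hμ1
    have hEz1 : EU u₁ ω (mix18 μ x (mix18 (1/2 : ℝ) xb xl))
        = μ * t + (1-μ) * ((a₁+b₁)/2) := by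
      rw [EU_mix18, hmixE1, ← ht]; ring
    have hμd : μ * d ≤ (b₁-a₁)/2 := by
      rw [hμdef, div_mul_eq_mul_div, div_le_iff₀ (by linarith)]
      nlinarith
    have hdd : μ * d = μ * |t - (a₁+b₁)/2| := by rw [hd]
    have h5 : -(μ * d) ≤ μ * (t - (a₁+b₁)/2) := by
      nlinarith [hdd, mul_nonneg hμ0.le
        (show (0:ℝ) ≤ t - (a₁+b₁)/2 + |t - (a₁+b₁)/2| by linarith [neg_abs_le (t - (a₁+b₁)/2)])]
    have h6 : μ * (t - (a₁+b₁)/2) ≤ μ * d := by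
      nlinarith [hdd, mul_nonneg hμ0.le
        (show (0:ℝ) ≤ |t - (a₁+b₁)/2| - (t - (a₁+b₁)/2) by linarith [le_abs_self (t - (a₁+b₁)/2)])]
    have hbound1 : a₁ ≤ EU u₁ ω (mix18 μ x (mix18 (1/2 : ℝ) xb xl)) := by
      rw [hEz1]; nlinarith [h5, hμd]
    have hbound2 : EU u₁ ω (mix18 μ x (mix18 (1/2 : ℝ) xb xl)) ≤ b₁ := by
      rw [hEz1]; nlinarith [h6, hμd]
    have hkey := hcal ω _ hz hbound1 hbound2
    rw [EU_mix18, hmixE2, hEz1] at hkey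
    have hmid : (1/2 : ℝ) * b₂ + (1 - 1/2) * a₂ = α * ((a₁+b₁)/2) + β := by
      rw [hβ_def]; linear_combination (-(1/2) : ℝ) * hαB
    have h2 : μ * EU u₂ ω x = μ * (α * t + β) := by
      linear_combination hkey - (1-μ) * hmid
    exact mul_left_cancel₀ hμ0.ne' h2
  have haff : ∀ (ω : Ω) (m : M), u₂ ω m = α * u₁ ω m + β := by
    intro ω m
    have h := haff_lot ω _ (isLottery_delta m)
    rwa [EU_delta, EU_delta] at h
  -- conditional values of (P₂, u₂) in terms of u₁
  have hCond2 : ∀ (A : Finset Ω), A.Nonempty → ∀ x : M → ℝ, IsLottery x →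
      CondVal P₂ u₂ A x = α * CondVal P₂ u₁ A x + β := by
    intro A hA x hx
    have hS : (0:ℝ) < ∑ ω ∈ A, P₂ ω := Finset.sum_pos (fun ω _ => hP₂pos ω) hA
    have hw : ∑ ω ∈ A, P₂ ω / (∑ ω' ∈ A, P₂ ω') = 1 := by
      rw [← Finset.sum_div, div_self hS.ne']
    have hterm : ∀ ω ∈ A, (P₂ ω / ∑ ω' ∈ A, P₂ ω') * EU u₂ ω x
        = α * ((P₂ ω / ∑ ω' ∈ A, P₂ ω') * EU u₁ ω x) + β * (P₂ ω / ∑ ω' ∈ A, P₂ ω') :=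
      fun ω _ => by rw [haff_lot ω x hx]; ring
    simp only [CondVal]
    rw [Finset.sum_congr rfl hterm, Finset.sum_add_distrib, ← Finset.mul_sum,
      ← Finset.mul_sum, hw, mul_one]
  have hsame' : ∀ A : Finset Ω, A.Nonempty → ∀ x y : M → ℝ, IsLottery x → IsLottery y →
      (CondVal P₁ u₁ A y ≤ CondVal P₁ u₁ A x ↔ CondVal P₂ u₁ A y ≤ CondVal P₂ u₁ A x) := by
    intro A hA x y hx hy
    rw [hsame A hA x y hx hy, hCond2 A hA x hx, hCond2 A hA y hy]
    constructor <;> intro h <;> nlinarith [hα]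
  -- key: ratio identification on pairs where preferences differ
  have hpair_eq : ∀ ω ω' : Ω, ω ≠ ω' →
      (∃ x y : M → ℝ, IsLottery x ∧ IsLottery y ∧
        EU u₁ ω' y < EU u₁ ω' x ∧ EU u₁ ω x ≤ EU u₁ ω y) →
      P₁ ω * P₂ ω' = P₂ ω * P₁ ω' := by
    intro ω ω' hne hex
    obtain ⟨x, y, hx, hy, h1, h2⟩ := hex
    have hd1 : 0 < P₁ ω + P₁ ω' := by have := hP₁pos ω; have := hP₁pos ω'; linarith
    have hd2 : 0 < P₂ ω + P₂ ω' := by have := hP₂pos ω; have := hP₂pos ω'; linarith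
    have hA : ({ω, ω'} : Finset Ω).Nonempty := ⟨ω, by simp⟩
    have hq1' : P₁ ω' / (P₁ ω + P₁ ω') = 1 - P₁ ω / (P₁ ω + P₁ ω') := by field_simp; ring
    have hq2' : P₂ ω' / (P₂ ω + P₂ ω') = 1 - P₂ ω / (P₂ ω + P₂ ω') := by field_simp; ring
    have hC1 : ∀ z : M → ℝ, CondVal P₁ u₁ {ω, ω'} z
        = (P₁ ω / (P₁ ω + P₁ ω')) * EU u₁ ω z
          + (1 - P₁ ω / (P₁ ω + P₁ ω')) * EU u₁ ω' z := by
      intro z; rw [CondVal_pair P₁ u₁ z hne, hq1']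
    have hC2 : ∀ z : M → ℝ, CondVal P₂ u₁ {ω, ω'} z
        = (P₂ ω / (P₂ ω + P₂ ω')) * EU u₁ ω z
          + (1 - P₂ ω / (P₂ ω + P₂ ω')) * EU u₁ ω' z := by
      intro z; rw [CondVal_pair P₂ u₁ z hne, hq2']
    have hp10 : 0 ≤ P₁ ω / (P₁ ω + P₁ ω') := div_nonneg (hP₁pos ω).le hd1.le
    have hp11 : P₁ ω / (P₁ ω + P₁ ω') ≤ 1 := by
      rw [div_le_one hd1]; linarith [hP₁pos ω']
    have hp20 : 0 ≤ P₂ ω / (P₂ ω + P₂ ω') := div_nonneg (hP₂pos ω).le hd2.le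
    have hp21 : P₂ ω / (P₂ ω + P₂ ω') ≤ 1 := by
      rw [div_le_one hd2]; linarith [hP₂pos ω']
    have hBlt' : EU u₁ ω' xl < EU u₁ ω' xb := by rw [hEl1 ω', hEb1 ω']; linarith
    have hkey : P₁ ω / (P₁ ω + P₁ ω') = P₂ ω / (P₂ ω + P₂ ω') := by
      by_contra hne'
      rcases lt_or_gt_of_ne hne' with hlt | hgt
      · obtain ⟨x', y', hx', hy', hi1, hi2⟩ :=
          sep18 u₁ ω ω' xb xl x y hxb hxl hx hy (hcb1 ω ω') (hcl1 ω ω') hBlt'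
            h1 h2 hp10 hp21 hlt
        have h3 := (hsame' {ω, ω'} hA x' y' hx' hy').1
          (by rw [hC1 x', hC1 y']; linarith)
        rw [hC2 x', hC2 y'] at h3
        linarith
      · obtain ⟨x', y', hx', hy', hi1, hi2⟩ :=
          sep18 u₁ ω ω' xb xl x y hxb hxl hx hy (hcb1 ω ω') (hcl1 ω ω') hBlt'
            h1 h2 hp20 hp11 hgt
        have h3 := (hsame' {ω, ω'} hA x' y' hx' hy').2
          (by rw [hC2 x', hC2 y']; linarith)
        rw [hC1 x', hC1 y'] at h3
        linarith
    rw [div_eq_div_iff hd1.ne' hd2.ne'] at hkey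
    linear_combination hkey
  -- states with genuinely different preferences
  have hprod2 : ∀ ω ω' : Ω,
      ¬ (∀ x y : M → ℝ, IsLottery x → IsLottery y →
        (EU u₁ ω y ≤ EU u₁ ω x ↔ EU u₁ ω' y ≤ EU u₁ ω' x)) →
      P₁ ω * P₂ ω' = P₂ ω * P₁ ω' := by
    intro ω ω' hns
    have hne : ω ≠ ω' := by rintro rfl; exact hns fun x y _ _ => Iff.rfl
    push_neg at hns
    obtain ⟨x, y, hx, hy, hniff⟩ := hns
    rcases hniff with ⟨ha, hb⟩ | ⟨ha, hb⟩
    · exact hpair_eq ω ω' hne ⟨y, x, hy, hx, hb, ha⟩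
    · have h4 := hpair_eq ω' ω hne.symm ⟨y, x, hy, hx, ha, hb⟩
      linear_combination -h4
  -- trio members have pairwise different preferences
  have htrioNS : ∀ ω ∈ ({ωa, ωb, ωc} : Finset Ω), ∀ ω' ∈ ({ωa, ωb, ωc} : Finset Ω), ω' ≠ ω →
      ¬ (∀ x y : M → ℝ, IsLottery x → IsLottery y →
        (EU u₁ ω y ≤ EU u₁ ω x ↔ EU u₁ ω' y ≤ EU u₁ ω' x)) := by
    intro ω hω ω' hω' hne hs
    obtain ⟨x, y, hx, hy, hst, hwk⟩ := hR ω hω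
    have hw := hwk ω' hω' hne
    have := (hs y x hy hx).2 hw
    linarith
  have hprod : ∀ ω ω' : Ω, P₁ ω * P₂ ω' = P₂ ω * P₁ ω' := by
    intro ω ω'
    by_cases hs : ∀ x y : M → ℝ, IsLottery x → IsLottery y →
        (EU u₁ ω y ≤ EU u₁ ω x ↔ EU u₁ ω' y ≤ EU u₁ ω' x)
    · -- find a trio member with different preferences from ω
      have hex : ∃ ω'' ∈ ({ωa, ωb, ωc} : Finset Ω),
          ¬ (∀ x y : M → ℝ, IsLottery x → IsLottery y →
            (EU u₁ ω y ≤ EU u₁ ω x ↔ EU u₁ ω'' y ≤ EU u₁ ω'' x)) := by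
        by_contra h
        push_neg at h
        have h1 := h ωa (by simp)
        have h2 := h ωb (by simp)
        exact htrioNS ωa (by simp) ωb (by simp) (Ne.symm hab)
          fun x y hx hy => ((h1 x y hx hy).symm.trans (h2 x y hx hy))
      obtain ⟨ω'', _, hns⟩ := hex
      have hns' : ¬ (∀ x y : M → ℝ, IsLottery x → IsLottery y →
          (EU u₁ ω' y ≤ EU u₁ ω' x ↔ EU u₁ ω'' y ≤ EU u₁ ω'' x)) :=
        fun h => hns fun x y hx hy => (hs x y hx hy).trans (h x y hx hy)
      have e1 := hprod2 ω ω'' hns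
      have e2 := hprod2 ω' ω'' hns'
      have h3 : P₁ ω * P₂ ω' * (P₂ ω'' * P₁ ω'') = P₂ ω * P₁ ω' * (P₂ ω'' * P₁ ω'') := by
        linear_combination (P₂ ω' * P₁ ω'') * e1 - (P₂ ω * P₁ ω'') * e2
      exact mul_right_cancel₀ (mul_pos (hP₂pos ω'') (hP₁pos ω'')).ne' h3
    · exact hprod2 ω ω' hs
  have hPeq : P₁ = P₂ := by
    funext ω
    have h1 : P₁ ω * ∑ ω', P₂ ω' = P₂ ω * ∑ ω', P₁ ω' := by
      rw [Finset.mul_sum, Finset.mul_sum]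
      exact Finset.sum_congr rfl fun ω' _ => hprod ω ω'
    rwa [hP₂sum, hP₁sum, mul_one, mul_one] at h1
  exact ⟨hPeq, α, β, hα, haff⟩
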